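/- arXiv:2101.07435 — 3 statements merged into one kernel-verified Lean document; each statement's English description precedes it below -/
import Mathlib

section
/- Assume all agents have additive cost functions and let α ≥ 1, n ≥ 2. Every α-EFX allocation is min{2nα/(n−1+2α), (nα+n−1)/(n−1+α)}-MMS. Moreover, for every β with 1 ≤ β < max{2nα/(2α+2n−3), 2n/(n+1)} there exists an n-agent instance with additive cost functions and an α-EFX allocation that is not β-MMS. -/
open Finset

/-- `T` is a `k`-partition of the bundle `S`: pairwise disjoint bundles whose union is `S`. -/
def IsPartitionOf {E : Type*} [DecidableEq E] {k : ℕ} (T : Fin k → Finset E) (S : Finset E) :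
    Prop :=
  (∀ i j : Fin k, i ≠ j → Disjoint (T i) (T j)) ∧ Finset.univ.biUnion T = S

/-- The maximin share of cost function `c` on `S` among `k` agents:
the minimum over `k`-partitions of `S` of the maximum cost of a bundle. -/
noncomputable def MMS {E : Type*} [DecidableEq E] (c : Finset E → ℝ) (k : ℕ) (S : Finset E) :
    ℝ :=
  sInf { m : ℝ | ∃ T : Fin k → Finset E, IsPartitionOf T S ∧ m = ⨆ j : Fin k, c (T j) }

/-- `c` is a nonnegative additive cost function. -/
def AdditiveCost {E : Type*} [DecidableEq E] (c : Finset E → ℝ) : Prop :=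
  (∀ S : Finset E, 0 ≤ c S) ∧ ∀ S : Finset E, c S = ∑ e ∈ S, c {e}

/-- `c` is a nonnegative monotone cost function with `c ∅ = 0`. -/
def MonotoneCost {E : Type*} (c : Finset E → ℝ) : Prop :=
  (∀ S : Finset E, 0 ≤ c S) ∧ c ∅ = 0 ∧ ∀ ⦃S T : Finset E⦄, S ⊆ T → c S ≤ c T

/-- `c` is subadditive. -/
def SubadditiveCost {E : Type*} [DecidableEq E] (c : Finset E → ℝ) : Prop :=
  ∀ S T : Finset E, c (S ∪ T) ≤ c S + c T

/-- `c` is submodular. -/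
def SubmodularCost {E : Type*} [DecidableEq E] (c : Finset E → ℝ) : Prop :=
  ∀ S T : Finset E, c (S ∪ T) + c (S ∩ T) ≤ c S + c T

/-- `A` is an allocation of all chores among the `n` agents. -/
def IsAllocation {E : Type*} [DecidableEq E] [Fintype E] {n : ℕ} (A : Fin n → Finset E) : Prop :=
  IsPartitionOf A Finset.univ

/-- `A` is `α`-envy-free. -/
def IsEF {E : Type*} {n : ℕ} (α : ℝ) (c : Fin n → Finset E → ℝ) (A : Fin n → Finset E) : Prop :=
  ∀ i j, c i (A i) ≤ α * c i (A j)

/-- `A` is `α`-envy-free up to one item. -/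
def IsEF1 {E : Type*} [DecidableEq E] {n : ℕ} (α : ℝ) (c : Fin n → Finset E → ℝ)
    (A : Fin n → Finset E) : Prop :=
  ∀ i j, i ≠ j → A i = ∅ ∨ ∃ e ∈ A i, c i (A i \ {e}) ≤ α * c i (A j)

/-- `A` is `α`-envy-free up to any (positive-cost) item. -/
def IsEFX {E : Type*} [DecidableEq E] {n : ℕ} (α : ℝ) (c : Fin n → Finset E → ℝ)
    (A : Fin n → Finset E) : Prop :=
  ∀ i j, i ≠ j → ∀ e ∈ A i, 0 < c i {e} → c i (A i \ {e}) ≤ α * c i (A j)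

/-- `A` is an `α`-MMS allocation. -/
def IsMMSFair {E : Type*} [DecidableEq E] [Fintype E] {n : ℕ} (α : ℝ)
    (c : Fin n → Finset E → ℝ) (A : Fin n → Finset E) : Prop :=
  ∀ i, c i (A i) ≤ α * MMS (c i) n Finset.univ

/-- `A` is an `α`-PMMS allocation. -/
def IsPMMS {E : Type*} [DecidableEq E] {n : ℕ} (α : ℝ)
    (c : Fin n → Finset E → ℝ) (A : Fin n → Finset E) : Prop :=
  ∀ i j, i ≠ j → c i (A i) ≤ α * MMS (c i) 2 (A i ∪ A j)

/-- The optimal (minimum) social cost over all allocations. -/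
noncomputable def OPT {E : Type*} [DecidableEq E] [Fintype E] {n : ℕ}
    (c : Fin n → Finset E → ℝ) : ℝ :=
  sInf { s : ℝ | ∃ A : Fin n → Finset E, IsAllocation A ∧ s = ∑ i, c i (A i) }

section Helpers
set_option linter.unusedSectionVars false

variable {E : Type*} [DecidableEq E] [Fintype E]

lemma partition_sum {k : ℕ} {c : Finset E → ℝ} (hc : AdditiveCost c)
    {T : Fin k → Finset E} {S : Finset E} (hT : IsPartitionOf T S) :
    ∑ j, c (T j) = c S := by
  calc ∑ j, c (T j) = ∑ j, ∑ e ∈ T j, c {e} :=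
        Finset.sum_congr rfl fun j _ => hc.2 (T j)
    _ = ∑ e ∈ Finset.univ.biUnion T, c {e} := by
        rw [Finset.sum_biUnion]
        intro a _ b _ hab
        exact hT.1 a b hab
    _ = c S := by rw [hT.2, ← hc.2 S]

lemma trivial_partition {n : ℕ} (hn : 0 < n) :
    IsPartitionOf (fun j : Fin n => if j = ⟨0, hn⟩ then (Finset.univ : Finset E) else ∅)
      Finset.univ := by
  constructor
  · intro i j hij
    by_cases hi : i = ⟨0, hn⟩
    · have hj : ¬ j = ⟨0, hn⟩ := by rintro rfl; exact hij hi
      simp [hi, hj]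
    · simp [hi]
  · ext e
    simp only [Finset.mem_univ, iff_true]
    exact Finset.mem_biUnion.mpr ⟨⟨0, hn⟩, Finset.mem_univ _, by simp⟩

lemma MMS_bddBelow {n : ℕ} (hn : 0 < n) {c : Finset E → ℝ} (hc : ∀ S, 0 ≤ c S) :
    BddBelow {m : ℝ | ∃ T : Fin n → Finset E,
      IsPartitionOf T Finset.univ ∧ m = ⨆ j : Fin n, c (T j)} := by
  refine ⟨0, ?_⟩
  rintro m ⟨T, hT, rfl⟩
  haveI : Nonempty (Fin n) := ⟨⟨0, hn⟩⟩
  exact le_trans (hc (T ⟨0, hn⟩)) (le_ciSup (f := fun j => c (T j)) (Set.Finite.bddAbove (Set.finite_range _)) _)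

lemma le_MMS {n : ℕ} (hn : 0 < n) {c : Finset E → ℝ} (b : ℝ)
    (hb : ∀ T : Fin n → Finset E, IsPartitionOf T Finset.univ → b ≤ ⨆ j : Fin n, c (T j)) :
    b ≤ MMS c n Finset.univ := by
  apply le_csInf
  · exact ⟨_, _, trivial_partition hn, rfl⟩
  · rintro m ⟨T, hT, rfl⟩
    exact hb T hT

lemma MMS_ge_avg {n : ℕ} (hn : 0 < n) {c : Finset E → ℝ} (hc : AdditiveCost c) :
    c Finset.univ ≤ n * MMS c n Finset.univ := by
  haveI : Nonempty (Fin n) := ⟨⟨0, hn⟩⟩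
  have h := le_MMS (E := E) hn (c := c) (c Finset.univ / n) ?_
  · rw [div_le_iff₀ (by exact_mod_cast hn)] at h
    linarith [h]
  · intro T hT
    rw [div_le_iff₀ (by exact_mod_cast hn)]
    calc c Finset.univ = ∑ j, c (T j) := (partition_sum hc hT).symm
      _ ≤ ∑ _j : Fin n, (⨆ j : Fin n, c (T j)) :=
          Finset.sum_le_sum fun j _ => le_ciSup (f := fun j => c (T j)) (Set.Finite.bddAbove (Set.finite_range _)) j
      _ = (⨆ j : Fin n, c (T j)) * n := by
          rw [Finset.sum_const, Finset.card_univ, Fintype.card_fin, nsmul_eq_mul, mul_comm]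

lemma MMS_ge_item {n : ℕ} (hn : 0 < n) {c : Finset E → ℝ} (hc : AdditiveCost c) (e : E) :
    c {e} ≤ MMS c n Finset.univ := by
  apply le_MMS hn
  intro T hT
  have he : e ∈ Finset.univ.biUnion T := by rw [hT.2]; exact Finset.mem_univ e
  obtain ⟨j, _, hj⟩ := Finset.mem_biUnion.mp he
  haveI : Nonempty (Fin n) := ⟨⟨0, hn⟩⟩
  refine le_trans ?_ (le_ciSup (f := fun j => c (T j)) (Set.Finite.bddAbove (Set.finite_range _)) j)
  rw [hc.2 (T j)]
  exact Finset.single_le_sum (fun e' _ => hc.1 {e'}) hj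

lemma MMS_nonneg {n : ℕ} (hn : 0 < n) {c : Finset E → ℝ} (hc : AdditiveCost c) :
    0 ≤ MMS c n Finset.univ := by
  apply le_MMS hn
  intro T hT
  haveI : Nonempty (Fin n) := ⟨⟨0, hn⟩⟩
  exact le_trans (hc.1 (T ⟨0, hn⟩)) (le_ciSup (f := fun j => c (T j)) (Set.Finite.bddAbove (Set.finite_range _)) _)

lemma MMS_le_partition {n : ℕ} (hn : 0 < n) {c : Finset E → ℝ} (hc : ∀ S, 0 ≤ c S)
    (T : Fin n → Finset E) (hT : IsPartitionOf T Finset.univ) :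
    MMS c n Finset.univ ≤ ⨆ j : Fin n, c (T j) :=
  csInf_le (MMS_bddBelow hn hc) ⟨T, hT, rfl⟩

end Helpers

section Grid
set_option linter.unusedSectionVars false

variable {n : ℕ}

/-- cost on the grid `Fin (n*n)` induced by a matrix `f`. -/
noncomputable def gcost (f : Fin n → Fin n → ℝ) (S : Finset (Fin (n*n))) : ℝ :=
  ∑ x ∈ S, f (finProdFinEquiv.symm x).1 (finProdFinEquiv.symm x).2

/-- row `i` of the grid. -/
def grow (i : Fin n) : Finset (Fin (n*n)) :=
  Finset.univ.image (fun l => finProdFinEquiv (i, l))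

/-- column `l` of the grid. -/
def gcol (l : Fin n) : Finset (Fin (n*n)) :=
  Finset.univ.image (fun i => finProdFinEquiv (i, l))

lemma gcost_additive (f : Fin n → Fin n → ℝ) (hf : ∀ i l, 0 ≤ f i l) :
    AdditiveCost (gcost f) := by
  constructor
  · intro S
    exact Finset.sum_nonneg fun x _ => hf _ _
  · intro S
    unfold gcost
    refine Finset.sum_congr rfl fun x _ => ?_
    rw [Finset.sum_singleton]

lemma grow_partition : IsPartitionOf (grow (n := n)) Finset.univ := by
  constructor
  · intro i j hij
    rw [Finset.disjoint_left]
    intro x hx hx'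
    obtain ⟨l, _, rfl⟩ := Finset.mem_image.mp hx
    obtain ⟨l', _, heq⟩ := Finset.mem_image.mp hx'
    exact hij (congrArg Prod.fst (finProdFinEquiv.injective heq)).symm
  · ext x
    simp only [Finset.mem_univ, iff_true]
    refine Finset.mem_biUnion.mpr ⟨(finProdFinEquiv.symm x).1, Finset.mem_univ _, ?_⟩
    exact Finset.mem_image.mpr ⟨(finProdFinEquiv.symm x).2, Finset.mem_univ _,
      finProdFinEquiv.apply_symm_apply x⟩

lemma gcol_partition : IsPartitionOf (gcol (n := n)) Finset.univ := by
  constructor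
  · intro i j hij
    rw [Finset.disjoint_left]
    intro x hx hx'
    obtain ⟨l, _, rfl⟩ := Finset.mem_image.mp hx
    obtain ⟨l', _, heq⟩ := Finset.mem_image.mp hx'
    exact hij (congrArg Prod.snd (finProdFinEquiv.injective heq)).symm
  · ext x
    simp only [Finset.mem_univ, iff_true]
    refine Finset.mem_biUnion.mpr ⟨(finProdFinEquiv.symm x).2, Finset.mem_univ _, ?_⟩
    exact Finset.mem_image.mpr ⟨(finProdFinEquiv.symm x).1, Finset.mem_univ _,
      finProdFinEquiv.apply_symm_apply x⟩

lemma gcost_grow (f : Fin n → Fin n → ℝ) (i : Fin n) :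
    gcost f (grow i) = ∑ l, f i l := by
  unfold gcost grow
  rw [Finset.sum_image (fun a _ b _ h =>
    congrArg Prod.snd (finProdFinEquiv.injective h))]
  simp

lemma gcost_gcol (f : Fin n → Fin n → ℝ) (l : Fin n) :
    gcost f (gcol l) = ∑ i, f i l := by
  unfold gcost gcol
  rw [Finset.sum_image (fun a _ b _ h =>
    congrArg Prod.fst (finProdFinEquiv.injective h))]
  simp

lemma sum_ite_zero' [NeZero n] (a b : ℝ) :
    ∑ i : Fin n, (if i = (0 : Fin n) then a else b) = a + ((n : ℝ) - 1) * b := by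
  have hn : 0 < n := Nat.pos_of_ne_zero (NeZero.ne n)
  rw [← Finset.add_sum_erase _ _ (Finset.mem_univ (0 : Fin n))]
  simp only [if_pos rfl]
  congr 1
  rw [Finset.sum_congr rfl (fun i hi => if_neg (Finset.mem_erase.mp hi).1),
    Finset.sum_const, Finset.card_erase_of_mem (Finset.mem_univ _),
    Finset.card_univ, Fintype.card_fin, nsmul_eq_mul, Nat.cast_sub hn, Nat.cast_one]

lemma sum_ite_lt_two (hn : 2 ≤ n) (x y : ℝ) :
    ∑ l : Fin n, (if l.val < 2 then x else y) = 2 * x + ((n : ℝ) - 2) * y := by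
  rw [Finset.sum_ite, Finset.sum_const, Finset.sum_const]
  have h2 : (Finset.univ.filter (fun l : Fin n => l.val < 2)).card = 2 := by
    have : Finset.univ.filter (fun l : Fin n => l.val < 2) =
        {⟨0, by omega⟩, ⟨1, by omega⟩} := by
      ext l
      simp only [Finset.mem_filter, Finset.mem_univ, true_and, Finset.mem_insert,
        Finset.mem_singleton, Fin.ext_iff]
      omega
    rw [this, Finset.card_insert_of_notMem (by simp [Fin.ext_iff]), Finset.card_singleton]
  have h3 : (Finset.univ.filter (fun l : Fin n => ¬ l.val < 2)).card = n - 2 := by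
    have := Finset.card_filter_add_card_filter_not
      (s := (Finset.univ : Finset (Fin n))) (p := fun l : Fin n => l.val < 2)
    rw [Finset.card_univ, Fintype.card_fin, h2] at this
    omega
  rw [h2, h3, nsmul_eq_mul, nsmul_eq_mul, Nat.cast_sub hn]
  push_cast
  ring

end Grid

section Construction
set_option linter.unusedSectionVars false

lemma construction {n : ℕ} [NeZero n] (hn : 2 ≤ n) {α β : ℝ} (hα : 1 ≤ α) (hβ0 : 0 ≤ β)
    (f : Fin n → Fin n → ℝ) (hf : ∀ i l, 0 ≤ f i l) (colB : ℝ)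
    (hEFX' : ∀ l j : Fin n, j ≠ (0 : Fin n) → 0 < f (0 : Fin n) l →
      (∑ l', f (0 : Fin n) l') - f (0 : Fin n) l ≤ α * ∑ l', f j l')
    (hcolB : ∀ l, (∑ i, f i l) ≤ colB)
    (hfin : β * colB < ∑ l, f (0 : Fin n) l) :
    ∃ (m : ℕ) (c : Fin n → Finset (Fin m) → ℝ) (A : Fin n → Finset (Fin m)),
      (∀ i, AdditiveCost (c i)) ∧ IsAllocation A ∧ IsEFX α c A ∧ ¬ IsMMSFair β c A := by
  have hn0 : 0 < n := by omega
  set z : Fin n := (0 : Fin n) with hz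
  refine ⟨n * n, fun i => if i = z then gcost f else fun _ => 0, grow, ?_, grow_partition, ?_, ?_⟩
  · intro i
    by_cases hi : i = z
    · simpa [hi] using gcost_additive f hf
    · simp only [if_neg hi]
      exact ⟨fun _ => le_refl 0, fun S => by simp⟩
  · -- EFX
    intro i j hij e he hpos
    by_cases hi : i = z
    · subst hi
      simp only [eq_self_iff_true, if_true] at hpos ⊢
      obtain ⟨l, _, rfl⟩ := Finset.mem_image.mp he
      have hwl : gcost f {finProdFinEquiv (z, l)} = f z l := by
        unfold gcost
        rw [Finset.sum_singleton, Equiv.symm_apply_apply]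
      have hdiff : gcost f (grow z \ {finProdFinEquiv (z, l)}) =
          gcost f (grow z) - f z l := by
        unfold gcost
        rw [← Finset.erase_eq, Finset.sum_erase_eq_sub he]
        congr 1
        rw [Equiv.symm_apply_apply]
      rw [hdiff, gcost_grow, gcost_grow]
      rw [hwl] at hpos
      exact hEFX' l j (Ne.symm hij) hpos
    · simp only [if_neg hi] at hpos
      exact absurd hpos (lt_irrefl 0)
  · -- not MMS fair
    intro hMMS
    have h0 := hMMS z
    simp only [eq_self_iff_true, if_true] at h0
    rw [gcost_grow] at h0
    have hMle : MMS (gcost f) n Finset.univ ≤ colB := by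
      refine le_trans (MMS_le_partition hn0 (fun S => Finset.sum_nonneg fun x _ => hf _ _)
        gcol gcol_partition) ?_
      haveI : Nonempty (Fin n) := ⟨z⟩
      refine ciSup_le fun l => ?_
      show gcost f (gcol l) ≤ colB
      rw [gcost_gcol]
      exact hcolB l
    have : β * MMS (gcost f) n Finset.univ ≤ β * colB :=
      mul_le_mul_of_nonneg_left hMle hβ0
    linarith

end Construction

section Main
set_option linter.unusedSectionVars false
set_option maxHeartbeats 1000000

theorem alphaEFX_MMS_bounds' :
    (∀ (E : Type) [DecidableEq E] [Fintype E] (n : ℕ), 2 ≤ n → ∀ α : ℝ, 1 ≤ α →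
      ∀ c : Fin n → Finset E → ℝ, (∀ i, AdditiveCost (c i)) →
      ∀ A : Fin n → Finset E, IsAllocation A → IsEFX α c A →
        IsMMSFair (min (2 * (n : ℝ) * α / ((n : ℝ) - 1 + 2 * α))
          (((n : ℝ) * α + (n : ℝ) - 1) / ((n : ℝ) - 1 + α))) c A) := by
  intro E _ _ n hn α hα c hc A hA hEFX i
  have hn0 : 0 < n := by omega
  have hn2 : (2:ℝ) ≤ (n:ℝ) := by exact_mod_cast hn
  have hα0 : (0:ℝ) < α := by linarith
  obtain ⟨hpos, hadd⟩ := hc i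
  set μ := MMS (c i) n Finset.univ with hμ
  have hμ0 : 0 ≤ μ := MMS_nonneg hn0 (hc i)
  have havg : c i Finset.univ ≤ (n:ℝ) * μ := MMS_ge_avg hn0 (hc i)
  have hitem : ∀ e : E, c i {e} ≤ μ := MMS_ge_item hn0 (hc i)
  have hd2 : (0:ℝ) < (n:ℝ) - 1 + 2*α := by linarith
  have hd1 : (0:ℝ) < (n:ℝ) - 1 + α := by linarith
  set x := c i (A i) with hx
  show x ≤ _ * μ
  by_cases hPne : ((A i).filter fun e => 0 < c i {e}).Nonempty
  · obtain ⟨e₀, he₀P, hmin⟩ := Finset.exists_min_image _ (fun e => c i {e}) hPne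
    obtain ⟨he₀A, hspos⟩ := Finset.mem_filter.mp he₀P
    set s := c i {e₀} with hs
    have hAdiff : c i (A i \ {e₀}) = x - s := by
      have h1 : c i (A i \ {e₀}) = ∑ e ∈ (A i).erase e₀, c i {e} := by
        rw [Finset.erase_eq]; exact hadd _
      rw [h1, Finset.sum_erase_eq_sub he₀A, ← hadd (A i)]
    have hEnvy : ∀ j, j ≠ i → x - s ≤ α * c i (A j) := fun j hj =>
      hAdiff ▸ hEFX i j (Ne.symm hj) e₀ he₀A hspos
    have hSumOthers : ∑ j ∈ Finset.univ.erase i, c i (A j) = c i Finset.univ - x := by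
      rw [Finset.sum_erase_eq_sub (Finset.mem_univ i), partition_sum (hc i) hA]
    have hsum : ((n:ℝ) - 1) * (x - s) ≤ α * (c i Finset.univ - x) := by
      have h1 : ∑ _j ∈ Finset.univ.erase i, (x - s) ≤
          ∑ j ∈ Finset.univ.erase i, α * c i (A j) :=
        Finset.sum_le_sum fun j hj => hEnvy j (Finset.mem_erase.mp hj).1
      rw [Finset.sum_const, Finset.card_erase_of_mem (Finset.mem_univ i),
        Finset.card_univ, Fintype.card_fin, ← Finset.mul_sum, hSumOthers,
        nsmul_eq_mul, Nat.cast_sub (by omega : 1 ≤ n), Nat.cast_one] at h1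
      exact h1
    have hsμ : s ≤ μ := hitem e₀
    have hcuμ : α * c i Finset.univ ≤ α * ((n:ℝ) * μ) :=
      mul_le_mul_of_nonneg_left havg (le_of_lt hα0)
    have hB1 : x ≤ (((n:ℝ) * α + (n:ℝ) - 1) / ((n:ℝ) - 1 + α)) * μ := by
      rw [div_mul_eq_mul_div, le_div_iff₀ hd1]
      have hss : ((n:ℝ)-1) * s ≤ ((n:ℝ)-1) * μ :=
        mul_le_mul_of_nonneg_left hsμ (by linarith)
      linarith
    have hB2 : x ≤ (2 * (n:ℝ) * α / ((n:ℝ) - 1 + 2*α)) * μ := by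
      rw [div_mul_eq_mul_div, le_div_iff₀ hd2]
      by_cases hP1 : ∃ e₁ ∈ (A i).filter fun e => 0 < c i {e}, e₁ ≠ e₀
      · obtain ⟨e₁, he₁P, he₁ne⟩ := hP1
        obtain ⟨he₁A, _⟩ := Finset.mem_filter.mp he₁P
        have h2s : 2 * s ≤ x := by
          have hsub : ({e₀, e₁} : Finset E) ⊆ A i := by
            intro e he
            rcases Finset.mem_insert.mp he with rfl | he
            · exact he₀A
            · rw [Finset.mem_singleton.mp he]; exact he₁A
          have hpair : ∑ e ∈ ({e₀, e₁} : Finset E), c i {e} ≤ ∑ e ∈ A i, c i {e} :=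
            Finset.sum_le_sum_of_subset_of_nonneg hsub fun e _ _ => hpos {e}
          rw [Finset.sum_pair (Ne.symm he₁ne)] at hpair
          have hmin1 := hmin e₁ he₁P
          rw [hx, hadd (A i)]
          linarith
        have h5 : ((n:ℝ)-1) * (2*s) ≤ ((n:ℝ)-1) * x :=
          mul_le_mul_of_nonneg_left h2s (by linarith)
        linarith
      · have hxs : x = s := by
          push_neg at hP1
          have hPeq : (A i).filter (fun e => 0 < c i {e}) = {e₀} :=
            Finset.eq_singleton_iff_unique_mem.mpr ⟨he₀P, fun e he => hP1 e he⟩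
          have hsplit := Finset.sum_filter_add_sum_filter_not (A i)
            (fun e => 0 < c i {e}) (fun e => c i {e})
          have hzero : ∑ e ∈ (A i).filter (fun e => ¬ 0 < c i {e}), c i {e} = 0 :=
            Finset.sum_eq_zero fun e he =>
              le_antisymm (not_lt.mp (Finset.mem_filter.mp he).2) (hpos {e})
          rw [hx, hadd (A i), ← hsplit, hPeq, Finset.sum_singleton, hzero, add_zero]
        have hfac : (0:ℝ) ≤ 2*(n:ℝ)*α - ((n:ℝ) - 1 + 2*α) := by nlinarith
        have hxd : x * ((n:ℝ) - 1 + 2*α) ≤ μ * ((n:ℝ) - 1 + 2*α) :=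
          mul_le_mul_of_nonneg_right (hxs ▸ hsμ) (le_of_lt hd2)
        nlinarith [mul_nonneg hμ0 hfac]
    rcases le_total (2 * (n:ℝ) * α / ((n:ℝ) - 1 + 2*α))
        (((n:ℝ) * α + (n:ℝ) - 1) / ((n:ℝ) - 1 + α)) with h | h
    · rw [min_eq_left h]; exact hB2
    · rw [min_eq_right h]; exact hB1
  · have hx0 : x = 0 := by
      rw [hx, hadd (A i)]
      refine Finset.sum_eq_zero fun e he => ?_
      have hnot : ¬ 0 < c i {e} := fun hlt =>
        hPne ⟨e, Finset.mem_filter.mpr ⟨he, hlt⟩⟩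
      linarith [hpos {e}]
    rw [hx0]
    refine mul_nonneg (le_min ?_ ?_) hμ0
    · positivity
    · apply div_nonneg (by nlinarith) (le_of_lt hd1)

end Main

section Main2
set_option linter.unusedSectionVars false
set_option maxHeartbeats 1000000

theorem alphaEFX_MMS_lb :
    (∀ n : ℕ, 2 ≤ n → ∀ α : ℝ, 1 ≤ α → ∀ β : ℝ, 1 ≤ β →
      β < max (2 * (n : ℝ) * α / (2 * α + 2 * (n : ℝ) - 3)) (2 * (n : ℝ) / ((n : ℝ) + 1)) →
      ∃ (m : ℕ) (c : Fin n → Finset (Fin m) → ℝ) (A : Fin n → Finset (Fin m)),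
        (∀ i, AdditiveCost (c i)) ∧ IsAllocation A ∧ IsEFX α c A ∧
        ¬ IsMMSFair β c A) := by
  intro n hn α hα β hβ hlt
  haveI : NeZero n := ⟨by omega⟩
  have hn2 : (2:ℝ) ≤ (n:ℝ) := by exact_mod_cast hn
  have hα0 : (0:ℝ) < α := by linarith
  have hnR : (0:ℝ) < (n:ℝ) := by linarith
  have hβ0 : (0:ℝ) ≤ β := by linarith
  have hn1 : (0:ℝ) < (n:ℝ) - 1 := by linarith
  rcases lt_max_iff.mp hlt with h | h
  · -- branch 1
    set τ : ℝ := ((n:ℝ)-1)/((n:ℝ)*α) with hτ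
    have hτ0 : 0 ≤ τ := div_nonneg (by linarith) (by positivity)
    have hτval : (n:ℝ)*α*τ = (n:ℝ)-1 := by
      rw [hτ]; field_simp
    refine construction hn hα hβ0
      (fun i _l => if i = 0 then 1 else τ)
      (fun i l => by split
                     · norm_num
                     · exact hτ0)
      (1 + ((n:ℝ)-1)*τ) ?_ ?_ ?_
    · intro l j hj _hpos
      simp only [eq_self_iff_true, if_true, if_neg hj, Finset.sum_const,
        Finset.card_univ, Fintype.card_fin, nsmul_eq_mul, mul_one]
      have : α * ((n:ℝ) * τ) = (n:ℝ) - 1 := by rw [← hτval]; ring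
      rw [this]
    · intro l
      rw [sum_ite_zero']
    · simp only [eq_self_iff_true, if_true, Finset.sum_const, Finset.card_univ,
        Fintype.card_fin, nsmul_eq_mul, mul_one]
      have hden : (0:ℝ) < 2*α+2*(n:ℝ)-3 := by linarith
      have h1 : β*(2*α+2*(n:ℝ)-3) < 2*(n:ℝ)*α := (lt_div_iff₀ hden).mp h
      have hnα : (0:ℝ) < (n:ℝ)*α := by positivity
      rw [← mul_lt_mul_iff_of_pos_right hnα]
      have hexp : β*(1+((n:ℝ)-1)*τ)*((n:ℝ)*α) =
          β*((n:ℝ)*α) + β*(((n:ℝ)-1)*((n:ℝ)-1)) := by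
        have : ((n:ℝ)-1)*τ*((n:ℝ)*α) = ((n:ℝ)-1)*((n:ℝ)-1) := by
          rw [show ((n:ℝ)-1)*τ*((n:ℝ)*α) = ((n:ℝ)-1)*((n:ℝ)*α*τ) by ring, hτval]
        nlinarith [this]
      rw [hexp]
      have h2 : (n:ℝ)*(β*(2*α+2*(n:ℝ)-3)) < (n:ℝ)*(2*(n:ℝ)*α) :=
        mul_lt_mul_of_pos_left h1 hnR
      have h3 : (0:ℝ) ≤ β*((n:ℝ)-2) := mul_nonneg hβ0 (by linarith)
      nlinarith [h2, h3]
  · -- branch 2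
    set a : ℝ := 1/((n:ℝ)*((n:ℝ)-1)) with ha
    set b : ℝ := ((n:ℝ)+1)/((n:ℝ)*((n:ℝ)-1)) with hb
    have hden0 : (0:ℝ) < (n:ℝ)*((n:ℝ)-1) := by positivity
    have ha0 : 0 ≤ a := by positivity
    have hb0 : 0 ≤ b := div_nonneg (by linarith) (le_of_lt hden0)
    refine construction hn hα hβ0
      (fun i l => if i = 0 then (if l.val < 2 then 1 else 0)
        else (if l.val < 2 then a else b))
      (fun i l => by split
                     · split
                       · norm_num
                       · norm_num
                     · split
                       · exact ha0
                       · exact hb0)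
      (((n:ℝ)+1)/(n:ℝ)) ?_ ?_ ?_
    · intro l j hj hpos
      simp only [eq_self_iff_true, if_true, if_neg hj] at hpos ⊢
      have hl2 : l.val < 2 := by
        by_contra hc
        rw [if_neg hc] at hpos
        exact lt_irrefl 0 hpos
      rw [if_pos hl2, sum_ite_lt_two hn, sum_ite_lt_two hn]
      have hrow : 2*a + ((n:ℝ)-2)*b = 1 := by
        rw [ha, hb]
        field_simp
        ring
      rw [hrow]
      linarith
    · intro l
      rw [sum_ite_zero']
      by_cases hl2 : l.val < 2
      · rw [if_pos hl2, if_pos hl2]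
        have : 1 + ((n:ℝ)-1)*a = ((n:ℝ)+1)/(n:ℝ) := by
          rw [ha]; field_simp
        rw [this]
      · rw [if_neg hl2, if_neg hl2]
        have : 0 + ((n:ℝ)-1)*b = ((n:ℝ)+1)/(n:ℝ) := by
          rw [hb]; field_simp; ring
        rw [this]
    · simp only [eq_self_iff_true, if_true]
      rw [sum_ite_lt_two hn]
      have hn1' : (0:ℝ) < (n:ℝ)+1 := by linarith
      have h1 : β*((n:ℝ)+1) < 2*(n:ℝ) := (lt_div_iff₀ hn1').mp h
      rw [show β*(((n:ℝ)+1)/(n:ℝ)) = β*((n:ℝ)+1)/(n:ℝ) by ring, div_lt_iff₀ hnR]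
      linarith

end Main2


/-- Proposition 4.5: with additive cost functions, every `α`-EFX allocation is
`min{2nα/(n-1+2α), (nα+n-1)/(n-1+α)}`-MMS, while it need not be `β`-MMS for any
`β < max{2nα/(2α+2n-3), 2n/(n+1)}`. -/
theorem alphaEFX_MMS_bounds :
    (∀ (E : Type) [DecidableEq E] [Fintype E] (n : ℕ), 2 ≤ n → ∀ α : ℝ, 1 ≤ α →
      ∀ c : Fin n → Finset E → ℝ, (∀ i, AdditiveCost (c i)) →
      ∀ A : Fin n → Finset E, IsAllocation A → IsEFX α c A →
        IsMMSFair (min (2 * (n : ℝ) * α / ((n : ℝ) - 1 + 2 * α))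
          (((n : ℝ) * α + (n : ℝ) - 1) / ((n : ℝ) - 1 + α))) c A) ∧
    (∀ n : ℕ, 2 ≤ n → ∀ α : ℝ, 1 ≤ α → ∀ β : ℝ, 1 ≤ β →
      β < max (2 * (n : ℝ) * α / (2 * α + 2 * (n : ℝ) - 3)) (2 * (n : ℝ) / ((n : ℝ) + 1)) →
      ∃ (m : ℕ) (c : Fin n → Finset (Fin m) → ℝ) (A : Fin n → Finset (Fin m)),
        (∀ i, AdditiveCost (c i)) ∧ IsAllocation A ∧ IsEFX α c A ∧
        ¬ IsMMSFair β c A) :=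
  ⟨alphaEFX_MMS_bounds', alphaEFX_MMS_lb⟩
end

section
/- Assume all agents have additive cost functions and let α ≥ 1. Every α-EFX allocation is (4α/(2α+1))-PMMS. Moreover this bound is tight: for every n ≥ 2 and α ≥ 1 there exists an n-agent instance with additive cost functions, an α-EFX allocation A, an agent i and an agent j ≠ i with c_i(A_i) = (4α/(2α+1))·MMS_i(2, A_i ∪ A_j). -/
open Finset

-- helper lemmas
lemma le_iSup_fin2 (f : Fin 2 → ℝ) (j : Fin 2) : f j ≤ ⨆ k, f k :=
  le_ciSup ((Set.finite_range f).bddAbove) j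

lemma biUnion_fin2 {E : Type*} [DecidableEq E] (T : Fin 2 → Finset E) :
    Finset.univ.biUnion T = T 0 ∪ T 1 := by
  ext e; simp [Fin.exists_fin_two]

lemma trivial_partition_s7 {E : Type*} [DecidableEq E] (S : Finset E) :
    IsPartitionOf ![S, ∅] S := by
  constructor
  · intro i j hij
    fin_cases i <;> fin_cases j <;> simp_all
  · rw [biUnion_fin2]; simp

lemma le_MMS2 {E : Type*} [DecidableEq E] {c : Finset E → ℝ}
    {S : Finset E} {L : ℝ}
    (h : ∀ T : Fin 2 → Finset E, IsPartitionOf T S → L ≤ ⨆ j, c (T j)) :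
    L ≤ MMS c 2 S := by
  apply le_csInf
  · exact ⟨_, ![S, ∅], trivial_partition_s7 S, rfl⟩
  · rintro m ⟨T, hT, rfl⟩; exact h T hT

lemma partition2_sum {E : Type*} [DecidableEq E] {c : Finset E → ℝ} (hc : AdditiveCost c)
    {T : Fin 2 → Finset E} {S : Finset E} (hT : IsPartitionOf T S) :
    c (T 0) + c (T 1) = c S := by
  obtain ⟨hd, hu⟩ := hT
  have h01 : Disjoint (T 0) (T 1) := hd 0 1 (by decide)
  have hun : T 0 ∪ T 1 = S := by rw [← hu, biUnion_fin2]
  rw [hc.2 S, hc.2 (T 0), hc.2 (T 1), ← hun, Finset.sum_union h01]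

lemma half_le_MMS2 {E : Type*} [DecidableEq E] {c : Finset E → ℝ} (hc : AdditiveCost c)
    (S : Finset E) : c S / 2 ≤ MMS c 2 S := by
  apply le_MMS2
  intro T hT
  have h0 := le_iSup_fin2 (fun j => c (T j)) 0
  have h1 := le_iSup_fin2 (fun j => c (T j)) 1
  have := partition2_sum hc hT
  linarith

lemma single_le_MMS2 {E : Type*} [DecidableEq E] {c : Finset E → ℝ} (hc : AdditiveCost c)
    {S : Finset E} {e : E} (he : e ∈ S) : c {e} ≤ MMS c 2 S := by
  apply le_MMS2
  intro T hT
  have hun : T 0 ∪ T 1 = S := by rw [← hT.2, biUnion_fin2]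
  have he' : e ∈ T 0 ∪ T 1 := by rw [hun]; exact he
  have key : ∀ j : Fin 2, e ∈ T j → c {e} ≤ ⨆ k, c (T k) := by
    intro j hj
    have h1 : c {e} ≤ c (T j) := by
      rw [hc.2 (T j)]
      exact Finset.single_le_sum (fun x _ => hc.1 {x}) hj
    exact h1.trans (le_iSup_fin2 (fun k => c (T k)) j)
  rcases Finset.mem_union.mp he' with h | h
  · exact key 0 h
  · exact key 1 h

lemma MMS2_nonneg {E : Type*} [DecidableEq E] {c : Finset E → ℝ} (hc : AdditiveCost c)
    (S : Finset E) : 0 ≤ MMS c 2 S := by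
  apply le_MMS2
  intro T hT
  exact (hc.1 (T 0)).trans (le_iSup_fin2 (fun k => c (T k)) 0)
lemma MMS2_le {E : Type*} [DecidableEq E] {c : Finset E → ℝ} (hc : AdditiveCost c)
    {S : Finset E} {T : Fin 2 → Finset E} (hT : IsPartitionOf T S) {b : ℝ}
    (hb : ∀ j, c (T j) ≤ b) : MMS c 2 S ≤ b := by
  have hbdd : BddBelow {m : ℝ | ∃ T : Fin 2 → Finset E, IsPartitionOf T S ∧ m = ⨆ j, c (T j)} := by
    refine ⟨0, ?_⟩
    rintro m ⟨T', hT', rfl⟩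
    exact le_trans (hc.1 (T' 0)) (le_iSup_fin2 (fun k => c (T' k)) 0)
  have h1 : MMS c 2 S ≤ ⨆ j, c (T j) := csInf_le hbdd ⟨T, hT, rfl⟩
  exact h1.trans (ciSup_le hb)

def agOf (e : ℕ) : ℕ := if e < 2 then 0 else if e < 4 then 1 else e - 2

noncomputable def wCost (α : ℝ) (e : ℕ) : ℝ := if e < 2 then α else if e < 4 then 1/2 else 1

lemma wCost_nonneg {α : ℝ} (hα : 1 ≤ α) (e : ℕ) : 0 ≤ wCost α e := by
  unfold wCost; split_ifs <;> linarith

noncomputable def cTop (α : ℝ) (n : ℕ) : Finset (Fin (n + 2)) → ℝ :=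
  fun S => ∑ e ∈ S, wCost α (e : ℕ)

lemma cTop_additive {α : ℝ} (hα : 1 ≤ α) (n : ℕ) : AdditiveCost (cTop α n) := by
  constructor
  · intro S; exact Finset.sum_nonneg fun e _ => wCost_nonneg hα _
  · intro S; simp [cTop]

def AEx (n : ℕ) : Fin n → Finset (Fin (n + 2)) :=
  fun i => univ.filter (fun e => agOf (e : ℕ) = (i : ℕ))

lemma AEx_alloc (n : ℕ) (hn : 2 ≤ n) : IsAllocation (AEx n) := by
  constructor
  · intro i j hij
    rw [Finset.disjoint_left]
    intro e hei hej
    simp only [AEx, mem_filter] at hei hej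
    exact hij (Fin.ext (hei.2.symm.trans hej.2))
  · ext e
    simp only [AEx, mem_biUnion, mem_filter, mem_univ, true_and, iff_true]
    have he := e.2
    have hb : agOf (e : ℕ) < n := by unfold agOf; split_ifs <;> omega
    exact ⟨⟨agOf (e : ℕ), hb⟩, rfl⟩

lemma AEx_zero (n : ℕ) (i : Fin n) (hi : (i : ℕ) = 0) :
    AEx n i = {(⟨0, by omega⟩ : Fin (n + 2)), ⟨1, by omega⟩} := by
  ext x
  have hx := x.2
  simp only [AEx, mem_filter, mem_univ, true_and, mem_insert, mem_singleton, hi, Fin.ext_iff, Fin.val_mk]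
  unfold agOf
  split_ifs <;> first | omega | (simp only [false_iff, not_or]; omega)

lemma AEx_one (n : ℕ) (i : Fin n) (hi : (i : ℕ) = 1) :
    AEx n i = {(⟨2, by omega⟩ : Fin (n + 2)), ⟨3, by omega⟩} := by
  ext x
  have hx := x.2
  simp only [AEx, mem_filter, mem_univ, true_and, mem_insert, mem_singleton, hi, Fin.ext_iff, Fin.val_mk]
  unfold agOf
  split_ifs <;> first | omega | (simp only [false_iff, not_or]; omega)

lemma AEx_big (n : ℕ) (i : Fin n) (hi : 2 ≤ (i : ℕ)) :
    AEx n i = {(⟨(i : ℕ) + 2, by have := i.2; omega⟩ : Fin (n + 2))} := by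
  ext x
  have hx := x.2
  simp only [AEx, mem_filter, mem_univ, true_and, mem_singleton, Fin.ext_iff, Fin.val_mk]
  unfold agOf
  split_ifs <;> first | omega | (simp only [false_iff, not_or]; omega)

lemma sum_AEx_ne_zero {α : ℝ} (hα : 1 ≤ α) (n : ℕ) (j : Fin n) (hj : (j : ℕ) ≠ 0) :
    cTop α n (AEx n j) = 1 := by
  by_cases hj1 : (j : ℕ) = 1
  · rw [AEx_one n j hj1]
    rw [cTop, Finset.sum_pair (by simp [Fin.ext_iff])]
    norm_num [wCost]
  · have hj2 : 2 ≤ (j : ℕ) := by omega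
    rw [AEx_big n j hj2]
    rw [cTop, Finset.sum_singleton]
    show wCost α ((j : ℕ) + 2) = 1
    unfold wCost
    split_ifs <;> first | rfl | omega

lemma sum_AEx_zero {α : ℝ} (n : ℕ) (i : Fin n) (hi : (i : ℕ) = 0) :
    cTop α n (AEx n i) = 2 * α := by
  rw [AEx_zero n i hi]
  rw [cTop, Finset.sum_pair (by simp [Fin.ext_iff])]
  norm_num [wCost]
  ring

lemma mms_core (n : ℕ) (α : ℝ) (hα : 1 ≤ α) (i0 i1 : Fin n)
    (h0 : (i0 : ℕ) = 0) (h1 : (i1 : ℕ) = 1) :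
    MMS (cTop α n) 2 (AEx n i0 ∪ AEx n i1) = α + 1 / 2 := by
  have hS : AEx n i0 ∪ AEx n i1 =
      ({⟨0, by omega⟩, ⟨1, by omega⟩, ⟨2, by omega⟩, ⟨3, by omega⟩} : Finset (Fin (n + 2))) := by
    rw [AEx_zero n i0 h0, AEx_one n i1 h1]
    ext x
    simp only [mem_union, mem_insert, mem_singleton]
    tauto
  rw [hS]
  apply le_antisymm
  · -- upper bound via partition {0,2} / {1,3}
    have hD : Disjoint ({⟨0, by omega⟩, ⟨2, by omega⟩} : Finset (Fin (n + 2)))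
        ({⟨1, by omega⟩, ⟨3, by omega⟩} : Finset (Fin (n + 2))) := by
      rw [Finset.disjoint_left]
      intro x hx hx'
      simp only [mem_insert, mem_singleton, Fin.ext_iff, Fin.val_mk] at hx hx'
      omega
    have hc1 : cTop α n ({⟨0, by omega⟩, ⟨2, by omega⟩} : Finset (Fin (n + 2))) = α + 1 / 2 := by
      rw [cTop, Finset.sum_pair (by simp [Fin.ext_iff])]
      norm_num [wCost]
    have hc2 : cTop α n ({⟨1, by omega⟩, ⟨3, by omega⟩} : Finset (Fin (n + 2))) = α + 1 / 2 := by
      rw [cTop, Finset.sum_pair (by simp [Fin.ext_iff])]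
      norm_num [wCost]
    apply MMS2_le (cTop_additive hα n)
      (T := fun k : Fin 2 => if k = 0 then ({⟨0, by omega⟩, ⟨2, by omega⟩} : Finset (Fin (n + 2)))
        else {⟨1, by omega⟩, ⟨3, by omega⟩})
    · constructor
      · intro a b hab
        by_cases ha : a = 0 <;> by_cases hb' : b = 0
        · exact absurd (ha.trans hb'.symm) hab
        · simp only [ha, hb', if_pos, if_neg, reduceIte]
          exact hD
        · simp only [ha, hb', if_pos, if_neg, reduceIte]
          exact hD.symm
        · exact absurd ((Fin.eq_one_of_ne_zero a ha).trans
            (Fin.eq_one_of_ne_zero b hb').symm) hab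
      · rw [biUnion_fin2]
        simp only [reduceIte, if_pos, if_neg, one_ne_zero]
        ext x
        simp only [mem_union, mem_insert, mem_singleton, Fin.ext_iff, Fin.val_mk]
        omega
    · intro j
      by_cases hj : j = 0
      · simp only [hj, reduceIte]
        rw [hc1]
      · simp only [hj, reduceIte]
        rw [hc2]
  · -- lower bound: half of total cost
    have h := half_le_MMS2 (cTop_additive hα n)
      ({⟨0, by omega⟩, ⟨1, by omega⟩, ⟨2, by omega⟩, ⟨3, by omega⟩} : Finset (Fin (n + 2)))
    have hc4 : cTop α n
        ({⟨0, by omega⟩, ⟨1, by omega⟩, ⟨2, by omega⟩, ⟨3, by omega⟩} : Finset (Fin (n + 2)))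
        = 2 * α + 1 := by
      rw [cTop]
      rw [Finset.sum_insert (by simp [Fin.ext_iff]),
          Finset.sum_insert (by simp [Fin.ext_iff]),
          Finset.sum_pair (by simp [Fin.ext_iff])]
      norm_num [wCost]
      ring
    rw [hc4] at h
    linarith

theorem aux_part2 (n : ℕ) (hn : 2 ≤ n) (α : ℝ) (hα : 1 ≤ α) :
    ∃ (m : ℕ) (c : Fin n → Finset (Fin m) → ℝ) (A : Fin n → Finset (Fin m)),
      (∀ i, AdditiveCost (c i)) ∧ IsAllocation A ∧ IsEFX α c A ∧
      ∃ i j, i ≠ j ∧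
        c i (A i) = (4 * α / (2 * α + 1)) * MMS (c i) 2 (A i ∪ A j) := by
  refine ⟨n + 2, fun i S => if (i : ℕ) = 0 then cTop α n S else 0, AEx n, ?_, AEx_alloc n hn,
    ?_, ?_⟩
  · intro i
    by_cases hi : (i : ℕ) = 0
    · simp only [hi, if_pos]
      constructor
      · intro S; simpa using (cTop_additive hα n).1 S
      · intro S; simpa using (cTop_additive hα n).2 S
    · constructor
      · intro S; simp [hi]
      · intro S; simp [hi]
  · -- EFX
    intro i j hij e he hpos
    by_cases hi : (i : ℕ) = 0
    swap
    · simp [hi] at hpos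
    · simp only [hi, if_pos, reduceIte]
      have hj : (j : ℕ) ≠ 0 := fun h => hij (Fin.ext (hi.trans h.symm))
      have hAj : cTop α n (AEx n j) = 1 := sum_AEx_ne_zero hα n j hj
      have he' : e ∈ AEx n i := he
      have hwe : wCost α (e : ℕ) = α := by
        have hag : agOf (e : ℕ) = 0 := by
          have := (Finset.mem_filter.mp he').2
          rw [hi] at this
          exact this
        have hlt : (e : ℕ) < 2 := by
          have hee := e.2
          unfold agOf at hag
          split_ifs at hag <;> omega
        rw [wCost, if_pos hlt]
      have hdd : cTop α n (AEx n i \ {e}) = cTop α n (AEx n i) - wCost α (e : ℕ) := by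
        rw [cTop, cTop, Finset.sdiff_singleton_eq_erase, Finset.sum_erase_eq_sub he']
      rw [hdd, sum_AEx_zero n i hi, hwe, hAj]
      linarith
  · refine ⟨⟨0, by omega⟩, ⟨1, by omega⟩, ?_, ?_⟩
    · intro h
      have := congrArg Fin.val h
      simp at this
    · have hden : (2 * α + 1) ≠ 0 := by positivity
      simp only [reduceIte]
      rw [sum_AEx_zero n _ rfl, mms_core n α hα _ _ rfl rfl]
      field_simp
      ring

theorem aux_part1 (E : Type) [DecidableEq E] [Fintype E] (n : ℕ) (hn : 2 ≤ n) (α : ℝ) (hα : 1 ≤ α)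
    (c : Fin n → Finset E → ℝ) (hc : ∀ i, AdditiveCost (c i))
    (A : Fin n → Finset E) (hA : IsAllocation A) (hEFX : IsEFX α c A) :
    IsPMMS (4 * α / (2 * α + 1)) c A := by
  intro i j hij
  obtain ⟨hc0, hc1⟩ := hc i
  have hdisj : Disjoint (A i) (A j) := hA.1 i j hij
  have hsum : c i (A i ∪ A j) = c i (A i) + c i (A j) := by
    rw [hc1 (A i ∪ A j), hc1 (A i), hc1 (A j), Finset.sum_union hdisj]
  have hy : 0 ≤ c i (A j) := hc0 _
  have hden : (0:ℝ) < 2 * α + 1 := by linarith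
  have hβ1 : 1 ≤ 4 * α / (2 * α + 1) := by
    rw [le_div_iff₀ hden]; linarith
  have hMMShalf := half_le_MMS2 (hc i) (A i ∪ A j)
  by_cases hcase : c i (A i) ≤ 2 * α * c i (A j)
  · have h1 : c i (A i) ≤ 4 * α / (2 * α + 1) * (c i (A i ∪ A j) / 2) := by
      rw [hsum, div_mul_eq_mul_div, le_div_iff₀ hden]
      ring_nf
      nlinarith
    calc c i (A i) ≤ 4 * α / (2 * α + 1) * (c i (A i ∪ A j) / 2) := h1
      _ ≤ 4 * α / (2 * α + 1) * MMS (c i) 2 (A i ∪ A j) := by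
          apply mul_le_mul_of_nonneg_left hMMShalf (by linarith)
  · push_neg at hcase
    have hxpos : 0 < c i (A i) := lt_of_le_of_lt (by nlinarith) hcase
    have hex : ∃ e ∈ A i, 0 < c i {e} := by
      by_contra h
      push_neg at h
      have : c i (A i) ≤ 0 := by
        rw [hc1 (A i)]
        exact Finset.sum_nonpos (fun e he => h e he)
      linarith
    obtain ⟨e1, he1, hpos1⟩ := hex
    have hsd : ∀ e : E, e ∈ A i → c i (A i \ {e}) = c i (A i) - c i {e} := by
      intro e he
      rw [hc1 (A i \ {e}), hc1 (A i), Finset.sdiff_singleton_eq_erase,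
          Finset.sum_erase_eq_sub he]
    have hE1 : c i (A i) - c i {e1} ≤ α * c i (A j) := by
      rw [← hsd e1 he1]; exact hEFX i j hij e1 he1 hpos1
    -- all other items have nonpositive (hence zero) cost
    have hothers : ∀ e ∈ (A i).erase e1, c i {e} ≤ 0 := by
      intro e he
      by_contra h
      push_neg at h
      have he' : e ∈ A i := Finset.mem_of_mem_erase he
      have hne : e ≠ e1 := Finset.ne_of_mem_erase he
      have hE2 : c i (A i) - c i {e} ≤ α * c i (A j) := by
        rw [← hsd e he']; exact hEFX i j hij e he' h
      have hpair : c i {e1} + c i {e} ≤ c i (A i) := by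
        rw [hc1 (A i)]
        have hsub : ({e1, e} : Finset E) ⊆ A i := by
          intro x hx
          rcases Finset.mem_insert.mp hx with rfl | hx
          · exact he1
          · rw [Finset.mem_singleton.mp hx]; exact he'
        calc c i {e1} + c i {e} = ∑ x ∈ ({e1, e} : Finset E), c i {x} := by
              rw [Finset.sum_pair (fun h' => hne (h'.symm))]
          _ ≤ ∑ x ∈ A i, c i {x} :=
              Finset.sum_le_sum_of_subset_of_nonneg hsub (fun x _ _ => hc0 {x})
      nlinarith
    have hxle : c i (A i) ≤ c i {e1} := by
      have : c i (A i) = c i {e1} + ∑ e ∈ (A i).erase e1, c i {e} := by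
        rw [hc1 (A i), ← Finset.add_sum_erase _ _ he1]
      have hle : ∑ e ∈ (A i).erase e1, c i {e} ≤ 0 := Finset.sum_nonpos hothers
      linarith
    have hMMS1 : c i {e1} ≤ MMS (c i) 2 (A i ∪ A j) :=
      single_le_MMS2 (hc i) (Finset.mem_union_left _ he1)
    nlinarith [MMS2_nonneg (hc i) (A i ∪ A j)]

/-- Proposition 4.7: with additive cost functions, every `α`-EFX allocation is
`4α/(2α+1)`-PMMS, and this bound is tight. -/
theorem alphaEFX_is_PMMS_and_tight :
    (∀ (E : Type) [DecidableEq E] [Fintype E] (n : ℕ), 2 ≤ n → ∀ α : ℝ, 1 ≤ α →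
      ∀ c : Fin n → Finset E → ℝ, (∀ i, AdditiveCost (c i)) →
      ∀ A : Fin n → Finset E, IsAllocation A → IsEFX α c A →
        IsPMMS (4 * α / (2 * α + 1)) c A) ∧
    (∀ n : ℕ, 2 ≤ n → ∀ α : ℝ, 1 ≤ α →
      ∃ (m : ℕ) (c : Fin n → Finset (Fin m) → ℝ) (A : Fin n → Finset (Fin m)),
        (∀ i, AdditiveCost (c i)) ∧ IsAllocation A ∧ IsEFX α c A ∧
        ∃ i j, i ≠ j ∧
          c i (A i) = (4 * α / (2 * α + 1)) * MMS (c i) 2 (A i ∪ A j)) := by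
  exact ⟨aux_part1, aux_part2⟩
end

section
/- Assume all agents have additive cost functions and let α ≥ 1. Every α-EF1 allocation is ((2α+1)/(α+1))-PMMS. Moreover this bound is tight: for every n ≥ 2 and α ≥ 1 there exists an n-agent instance with additive cost functions, an α-EF1 allocation A, an agent i and an agent j ≠ i with c_i(A_i) = ((2α+1)/(α+1))·MMS_i(2, A_i ∪ A_j). -/
open Finset

lemma additive_mono' {E : Type*} [DecidableEq E] {c : Finset E → ℝ} (h : AdditiveCost c)
    {S T : Finset E} (hST : S ⊆ T) : c S ≤ c T := by
  rw [h.2 S, h.2 T]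
  exact Finset.sum_le_sum_of_subset_of_nonneg hST (fun e _ _ => h.1 {e})

lemma additive_union' {E : Type*} [DecidableEq E] {c : Finset E → ℝ} (h : AdditiveCost c)
    {S T : Finset E} (hd : Disjoint S T) : c (S ∪ T) = c S + c T := by
  rw [h.2 S, h.2 T, h.2 (S ∪ T), Finset.sum_union hd]

lemma part1 {E : Type} [DecidableEq E] [Fintype E] {n : ℕ} {α : ℝ} (hα : 1 ≤ α)
    (c : Fin n → Finset E → ℝ) (hadd : ∀ i, AdditiveCost (c i))
    (A : Fin n → Finset E) (hA : IsAllocation A) (hEF1 : IsEF1 α c A) :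
    IsPMMS ((2 * α + 1) / (α + 1)) c A := by
  intro i j hij
  have hα1 : (0:ℝ) < α + 1 := by linarith
  have h2α : (0:ℝ) < 2 * α + 1 := by linarith
  set x := c i (A i) with hx
  set y := c i (A j) with hy
  set S : Set ℝ :=
    { m : ℝ | ∃ T : Fin 2 → Finset E, IsPartitionOf T (A i ∪ A j) ∧ m = ⨆ j : Fin 2, c i (T j) }
    with hS
  have key : ∀ m ∈ S, x * (α + 1) ≤ (2 * α + 1) * m := by
    rintro m ⟨T, ⟨hTd, hTu⟩, rfl⟩
    have hsup : ∀ k : Fin 2, c i (T k) ≤ ⨆ j2 : Fin 2, c i (T j2) :=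
      fun k => le_ciSup (Finite.bddAbove_range (fun j2 : Fin 2 => c i (T j2))) k
    set μ := ⨆ j2 : Fin 2, c i (T j2) with hμ
    have hμ0 : 0 ≤ μ := le_trans ((hadd i).1 (T 0)) (hsup 0)
    have hsum : c i (T 0) + c i (T 1) = x + y := by
      have h1 : T 0 ∪ T 1 = A i ∪ A j := by rw [← biUnion_fin2 T, hTu]
      have h2 : c i (T 0 ∪ T 1) = c i (T 0) + c i (T 1) :=
        additive_union' (hadd i) (hTd 0 1 (by decide))
      have h3 : c i (A i ∪ A j) = x + y := additive_union' (hadd i) (hA.1 i j hij)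
      rw [← h2, h1, h3]
    have hxy : x + y ≤ 2 * μ := by
      have h0 := hsup 0; have h1 := hsup 1; linarith
    rcases hEF1 i j hij with hAe | ⟨e, he, hle⟩
    · have hx0 : x = 0 := by
        rw [hx, hAe, (hadd i).2 ∅, Finset.sum_empty]
      have : (0:ℝ) ≤ (2 * α + 1) * μ := mul_nonneg (by linarith) hμ0
      calc x * (α + 1) = 0 := by rw [hx0]; ring
        _ ≤ (2 * α + 1) * μ := this
    · have hxe : c i (A i \ {e}) = x - c i {e} := by
        rw [(hadd i).2 (A i \ {e}), hx, (hadd i).2 (A i),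
          Finset.sum_eq_sum_sdiff_singleton_add he (fun e' => c i {e'})]
        ring
      have heμ : c i {e} ≤ μ := by
        have heu : e ∈ Finset.univ.biUnion T := by
          rw [hTu]; exact Finset.mem_union_left _ he
        obtain ⟨k, _, hk⟩ := Finset.mem_biUnion.mp heu
        exact le_trans (additive_mono' (hadd i) (Finset.singleton_subset_iff.mpr hk)) (hsup k)
      have h1 : x - c i {e} ≤ α * y := by rw [← hxe]; exact hle
      have h2 : α * (x + y) ≤ α * (2 * μ) :=
        mul_le_mul_of_nonneg_left hxy (by linarith)
      nlinarith
  have hne : S.Nonempty := by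
    refine ⟨⨆ j2 : Fin 2, c i ((![A i ∪ A j, ∅] : Fin 2 → Finset E) j2),
      ![A i ∪ A j, ∅], ⟨?_, ?_⟩, rfl⟩
    · intro a b hab
      fin_cases a <;> fin_cases b <;> simp_all
    · rw [biUnion_fin2]; simp
  have hlb : x * (α + 1) / (2 * α + 1) ≤ sInf S := by
    apply le_csInf hne
    intro m hm
    rw [div_le_iff₀ h2α]
    calc x * (α + 1) ≤ (2 * α + 1) * m := key m hm
      _ = m * (2 * α + 1) := by ring
  have : x * (α + 1) ≤ (2 * α + 1) * sInf S := by
    rw [div_le_iff₀ h2α] at hlb; linarith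
  have hfin : x ≤ (2 * α + 1) / (α + 1) * sInf S := by
    rw [div_mul_eq_mul_div, le_div_iff₀ hα1]; linarith
  exact hfin

lemma isPartitionOf_pair {E : Type*} [DecidableEq E] (S1 S2 : Finset E) (hd : Disjoint S1 S2) :
    IsPartitionOf ![S1, S2] (S1 ∪ S2) := by
  constructor
  · intro a b hab
    fin_cases a <;> fin_cases b
    · exact absurd rfl hab
    · exact hd
    · exact hd.symm
    · exact absurd rfl hab
  · ext e
    simp [Fin.exists_fin_two]

lemma ciSup_fin2_eq (f : Fin 2 → ℝ) {v : ℝ} (h0 : f 0 = v) (h1 : f 1 = v) :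
    (⨆ j, f j) = v := by
  apply le_antisymm
  · apply ciSup_le
    intro j
    fin_cases j
    · exact le_of_eq h0
    · exact le_of_eq h1
  · rw [← h0]
    exact le_ciSup (Finite.bddAbove_range f) 0

lemma part2 (n : ℕ) (hn : 2 ≤ n) (α : ℝ) (hα : 1 ≤ α) :
    ∃ (m : ℕ) (c : Fin n → Finset (Fin m) → ℝ) (A : Fin n → Finset (Fin m)),
      (∀ i, AdditiveCost (c i)) ∧ IsAllocation A ∧ IsEF1 α c A ∧
      ∃ i j, i ≠ j ∧
        c i (A i) = ((2 * α + 1) / (α + 1)) * MMS (c i) 2 (A i ∪ A j) := by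
  obtain ⟨k, rfl⟩ : ∃ k, n = k + 2 := ⟨n - 2, by omega⟩
  have hα1 : (0:ℝ) < α + 1 := by linarith
  -- item weights
  set w : Fin (k+3) → ℝ := fun e =>
    if e = 0 then 1 else if e = 1 then α / (α+1) else if e = 2 then 1 / (α+1) else 1 with hw
  have hw0 : ∀ e, 0 ≤ w e := by
    intro e; rw [hw]; dsimp only
    split_ifs <;> positivity
  have hwlb : ∀ e, e ≠ 0 → e ≠ 1 → 1 / (α+1) ≤ w e := by
    intro e h0 h1; rw [hw]; dsimp only
    rw [if_neg h0, if_neg h1]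
    split_ifs
    · exact le_rfl
    · rw [div_le_one hα1]; linarith
  set c : Fin (k+2) → Finset (Fin (k+3)) → ℝ := fun i S =>
    if i = 0 then ∑ e ∈ S, w e else 0 with hc
  set A : Fin (k+2) → Finset (Fin (k+3)) := fun i =>
    if i = 0 then {0, 1} else {i.succ} with hA
  -- basic Fin facts
  have h01 : (0 : Fin (k+3)) ≠ 1 := by simp [Fin.ext_iff]
  have h02 : (0 : Fin (k+3)) ≠ 2 := by simp [Fin.ext_iff, Nat.mod_eq_of_lt (show 2 < k + 3 by omega)]
  have h12 : (1 : Fin (k+3)) ≠ 2 := by simp [Fin.ext_iff, Nat.mod_eq_of_lt (show 2 < k + 3 by omega)]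
  have hsucc1 : ∀ j : Fin (k+2), j ≠ 0 → (j.succ : Fin (k+3)) ≠ 0 ∧ (j.succ : Fin (k+3)) ≠ 1 := by
    intro j hj
    have hjv : j.val ≠ 0 := fun h => hj (Fin.ext h)
    constructor <;> (intro h; have h' := congrArg Fin.val h; simp at h'; try omega)

  -- c 0 values
  have hc0sum : ∀ S, c 0 S = ∑ e ∈ S, w e := by intro S; simp [hc]
  refine ⟨k+3, c, A, ?_, ⟨?_, ?_⟩, ?_, 0, 1, ?_, ?_⟩
  · -- additive
    intro i
    by_cases hi : i = 0
    · subst hi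
      constructor
      · intro S; rw [hc0sum]; exact Finset.sum_nonneg fun e _ => hw0 e
      · intro S; rw [hc0sum]
        apply Finset.sum_congr rfl
        intro e _; rw [hc0sum, Finset.sum_singleton]
    · constructor <;> intro S <;> simp [hc, hi]
  · -- disjoint
    intro a b hab
    rw [hA]; dsimp only
    by_cases ha : a = 0 <;> by_cases hb : b = 0
    · exact absurd (ha.trans hb.symm) hab
    · rw [if_pos ha, if_neg hb]
      obtain ⟨hs0, hs1⟩ := hsucc1 b hb
      simp [Finset.disjoint_left, hs0.symm, hs1.symm]
    · rw [if_neg ha, if_pos hb]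
      obtain ⟨hs0, hs1⟩ := hsucc1 a ha
      simp [Finset.disjoint_left, hs0, hs1]
    · rw [if_neg ha, if_neg hb]
      simp only [Finset.disjoint_singleton]
      intro h
      exact hab (Fin.succ_injective _ h)
  · -- cover
    ext e
    simp only [Finset.mem_biUnion, Finset.mem_univ, true_and, Finset.mem_univ, iff_true]
    by_cases h0 : e = 0
    · exact ⟨0, by simp [hA, h0]⟩
    by_cases h1 : e = 1
    · exact ⟨0, by simp [hA, h1]⟩
    · refine ⟨e.pred h0, ?_⟩
      have hp0 : e.pred h0 ≠ 0 := by
        intro h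
        apply h1
        have := congrArg Fin.succ h
        rw [Fin.succ_pred] at this
        rw [this]
        simp [Fin.ext_iff]
      simp [hA, hp0, Fin.succ_pred]
  · -- EF1
    intro i j hij
    by_cases hi : i = 0
    · subst hi
      right
      have hj : j ≠ 0 := fun h => hij h.symm
      have hA0 : A 0 = {0, 1} := by simp [hA]
      have hAj : A j = {j.succ} := by simp [hA, hj]
      refine ⟨0, by rw [hA0]; simp, ?_⟩
      have hsd : A 0 \ {0} = ({1} : Finset (Fin (k+3))) := by
        rw [hA0]; ext e
        simp only [Finset.mem_sdiff, Finset.mem_insert, Finset.mem_singleton]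
        constructor
        · rintro ⟨h | h, h'⟩
          · exact absurd h h'
          · exact h
        · rintro rfl
          exact ⟨Or.inr rfl, h01.symm⟩
      rw [hsd, hAj, hc0sum, hc0sum, Finset.sum_singleton, Finset.sum_singleton]
      have hw1 : w 1 = α / (α+1) := by rw [hw]; simp [h01.symm]
      rw [hw1]
      obtain ⟨hs0, hs1⟩ := hsucc1 j hj
      have := hwlb j.succ hs0 hs1
      calc α / (α+1) = α * (1 / (α+1)) := by ring
        _ ≤ α * w j.succ := mul_le_mul_of_nonneg_left this (by linarith)
    · right
      have hAi : A i = {i.succ} := by simp [hA, hi]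
      refine ⟨i.succ, by rw [hAi]; simp, ?_⟩
      simp [hc, hi]
  · -- 0 ≠ 1 in Fin (k+2)
    simp [Fin.ext_iff]
  · -- the equality
    have hA0 : A 0 = {0, 1} := by simp [hA]
    have hA1 : A 1 = {(1 : Fin (k+2)).succ} := by
      rw [hA]; dsimp only
      rw [if_neg (by simp [Fin.ext_iff] : (1 : Fin (k+2)) ≠ 0)]
    have hs2 : ((1 : Fin (k+2)).succ : Fin (k+3)) = 2 := by simp [Fin.ext_iff]
    have hU : A 0 ∪ A 1 = ({0, 1, 2} : Finset (Fin (k+3))) := by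
      rw [hA0, hA1, hs2]; ext e; simp [or_assoc]
    have hw0' : w 0 = 1 := by simp [hw]
    have hw1' : w 1 = α / (α+1) := by simp [hw, h01.symm]
    have hw2' : w 2 = 1 / (α+1) := by simp [hw, h02.symm, h12.symm]
    have hcA0 : c 0 (A 0) = (2*α+1)/(α+1) := by
      rw [hA0, hc0sum, Finset.sum_pair h01, hw0', hw1']
      field_simp; ring
    have hMMS : MMS (c 0) 2 (A 0 ∪ A 1) = 1 := by
      rw [hU]
      set S : Set ℝ := { m : ℝ | ∃ T : Fin 2 → Finset (Fin (k+3)),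
        IsPartitionOf T {0, 1, 2} ∧ m = ⨆ j : Fin 2, c 0 (T j) } with hSdef
      have hlb : ∀ m ∈ S, 1 ≤ m := by
        rintro m ⟨T, ⟨hTd, hTu⟩, rfl⟩
        have h0mem : (0 : Fin (k+3)) ∈ Finset.univ.biUnion T := by rw [hTu]; simp
        obtain ⟨k0, _, hk0⟩ := Finset.mem_biUnion.mp h0mem
        have h1 : (1:ℝ) = c 0 {(0 : Fin (k+3))} := by
          rw [hc0sum, Finset.sum_singleton, hw0']
        have h2 : c 0 {(0 : Fin (k+3))} ≤ c 0 (T k0) := by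
          rw [hc0sum, hc0sum]
          exact Finset.sum_le_sum_of_subset_of_nonneg
            (Finset.singleton_subset_iff.mpr hk0) (fun e _ _ => hw0 e)
        have h3 : c 0 (T k0) ≤ ⨆ j : Fin 2, c 0 (T j) :=
          le_ciSup (Finite.bddAbove_range (fun j : Fin 2 => c 0 (T j))) k0
        linarith
      have hmem : (1:ℝ) ∈ S := by
        have hd : Disjoint ({0} : Finset (Fin (k+3))) {1, 2} := by
          simp [Finset.disjoint_left, h01, h02]
        have hUeq : ({0} : Finset (Fin (k+3))) ∪ {1, 2} = {0, 1, 2} := by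
          ext e; simp; tauto
        have hpart : IsPartitionOf ![({0} : Finset (Fin (k+3))), {1, 2}] {0, 1, 2} := by
          rw [← hUeq]; exact isPartitionOf_pair _ _ hd
        have hv0 : c 0 ((![({0} : Finset (Fin (k+3))), {1, 2}]) 0) = 1 := by
          rw [Matrix.cons_val_zero, hc0sum, Finset.sum_singleton, hw0']
        have hv1 : c 0 ((![({0} : Finset (Fin (k+3))), {1, 2}]) 1) = 1 := by
          rw [Matrix.cons_val_one, Matrix.cons_val_zero, hc0sum, Finset.sum_pair h12, hw1', hw2']
          field_simp
        exact ⟨![({0} : Finset (Fin (k+3))), {1, 2}], hpart,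
          (ciSup_fin2_eq (fun j : Fin 2 => c 0 ((![({0} : Finset (Fin (k+3))), {1, 2}]) j))
            hv0 hv1).symm⟩
      unfold MMS
      exact le_antisymm (csInf_le ⟨1, hlb⟩ hmem) (le_csInf ⟨1, hmem⟩ hlb)
    rw [hcA0, hMMS, mul_one]

/-- Proposition 4.8: with additive cost functions, every `α`-EF1 allocation is
`(2α+1)/(α+1)`-PMMS, and this bound is tight. -/
theorem alphaEF1_is_PMMS_and_tight :
    (∀ (E : Type) [DecidableEq E] [Fintype E] (n : ℕ), 2 ≤ n → ∀ α : ℝ, 1 ≤ α →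
      ∀ c : Fin n → Finset E → ℝ, (∀ i, AdditiveCost (c i)) →
      ∀ A : Fin n → Finset E, IsAllocation A → IsEF1 α c A →
        IsPMMS ((2 * α + 1) / (α + 1)) c A) ∧
    (∀ n : ℕ, 2 ≤ n → ∀ α : ℝ, 1 ≤ α →
      ∃ (m : ℕ) (c : Fin n → Finset (Fin m) → ℝ) (A : Fin n → Finset (Fin m)),
        (∀ i, AdditiveCost (c i)) ∧ IsAllocation A ∧ IsEF1 α c A ∧
        ∃ i j, i ≠ j ∧
          c i (A i) = ((2 * α + 1) / (α + 1)) * MMS (c i) 2 (A i ∪ A j)) := by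
  constructor
  · intro E _ _ n _ α hα c hc A hA hE
    exact part1 hα c hc A hA hE
  · exact part2
end
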